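/- For every real q>1, every n≥1 and every x∈[0,∞), the second central moment of the q-Szász operator is M_{n,q}((t−x)^2;x) = x/[n]_q. -/

import Mathlib

open scoped BigOperators

/-- The `q`-integer `[k]_q = (q^k - 1)/(q - 1)`. -/
noncomputable def qNat (q : ℝ) (k : ℕ) : ℝ := (q ^ k - 1) / (q - 1)

/-- The `q`-factorial `[k]_q! = [1]_q [2]_q ⋯ [k]_q`, with `[0]_q! = 1`. -/
noncomputable def qFactorial (q : ℝ) : ℕ → ℝ
  | 0 => 1
  | k + 1 => qFactorial q k * qNat q (k + 1)

/-- The `q`-exponential function `e_q(z) = ∑_{k=0}^∞ z^k/[k]_q!`. -/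
noncomputable def qExp (q z : ℝ) : ℝ := ∑' k : ℕ, z ^ k / qFactorial q k

/-- The `q`-Szász basis function
`s_{n,k}(q;x) = q^{-k(k-1)/2} ([n]_q^k x^k/[k]_q!) e_q(-[n]_q q^{-k} x)`. -/
noncomputable def qSzaszBasis (q : ℝ) (n k : ℕ) (x : ℝ) : ℝ :=
  (q ^ (k * (k - 1) / 2))⁻¹ * (qNat q n ^ k * x ^ k / qFactorial q k) *
    qExp q (-(qNat q n) * q ^ (-(k : ℤ)) * x)

/-- The `q`-Szász operator `M_{n,q}(f;x) = ∑_{k=0}^∞ f([k]_q/[n]_q) s_{n,k}(q;x)`. -/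
noncomputable def qSzasz (q : ℝ) (n : ℕ) (f : ℝ → ℝ) (x : ℝ) : ℝ :=
  ∑' k : ℕ, f (qNat q k / qNat q n) * qSzaszBasis q n k x

/-- The weight `w_0(x) = 1`, `w_p(x) = (1 + x^p)⁻¹` for `p ≥ 1`. -/
noncomputable def weight (p : ℕ) (x : ℝ) : ℝ := if p = 0 then 1 else (1 + x ^ p)⁻¹

/-- The weighted sup-norm `‖f‖_p = sup_{x ≥ 0} w_p(x)|f(x)|`. -/
noncomputable def wnorm (p : ℕ) (f : ℝ → ℝ) : ℝ :=
  ⨆ x : Set.Ici (0 : ℝ), weight p x.1 * |f x.1|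

/-- Membership in the space `C_p`: `f` is continuous on `[0,∞)` and `w_p f` is
uniformly continuous and bounded on `[0,∞)`. -/
def MemCp (p : ℕ) (f : ℝ → ℝ) : Prop :=
  ContinuousOn f (Set.Ici 0) ∧
  UniformContinuousOn (fun x => weight p x * f x) (Set.Ici 0) ∧
  ∃ M : ℝ, ∀ x ∈ Set.Ici (0 : ℝ), |weight p x * f x| ≤ M

/-- The second difference `Δ_h² f(x) = f(x+2h) - 2f(x+h) + f(x)`. -/
noncomputable def delta2 (f : ℝ → ℝ) (h x : ℝ) : ℝ := f (x + 2 * h) - 2 * f (x + h) + f x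

/-- The second modulus of smoothness `ω_p²(f;δ) = sup_{0<h≤δ} ‖Δ_h² f‖_p`. -/
noncomputable def omega2 (p : ℕ) (f : ℝ → ℝ) (δ : ℝ) : ℝ :=
  ⨆ h : {h : ℝ // 0 < h ∧ h ≤ δ}, wnorm p (fun x => delta2 f h.1 x)

/-- The (first) modulus of continuity on `[0,∞)`:
`ω(g;δ) = sup {|g(s)-g(t)| : s,t ≥ 0, |s-t| ≤ δ}`. -/
noncomputable def omega1 (g : ℝ → ℝ) (δ : ℝ) : ℝ :=
  sSup {d : ℝ | ∃ s t : ℝ, 0 ≤ s ∧ 0 ≤ t ∧ |s - t| ≤ δ ∧ d = |g s - g t|}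

/-- The `q`-derivative `(D_q g)(x) = (g(qx) - g(x))/((q-1)x)`. -/
noncomputable def qDeriv (q : ℝ) (g : ℝ → ℝ) (x : ℝ) : ℝ := (g (q * x) - g x) / ((q - 1) * x)

/-- The `q`-Stirling-type numbers: `S_q(0,0)=1`, `S_q(m,0)=0` for `m>0`,
`S_q(m,j)=0` for `m<j`, and `S_q(m+1,j)=[j]_q S_q(m,j) + S_q(m,j-1)`. -/
noncomputable def qStirling (q : ℝ) : ℕ → ℕ → ℝ
  | 0, 0 => 1
  | 0, _ + 1 => 0
  | _ + 1, 0 => 0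
  | m + 1, j + 1 => qNat q (j + 1) * qStirling q m (j + 1) + qStirling q m j

section H
variable {q : ℝ} (hq : 1 < q)
include hq

lemma q_pos : (0:ℝ) < q := lt_trans one_pos hq
lemma q_ne : q ≠ 0 := ne_of_gt (q_pos hq)

lemma qNat_zero : qNat q 0 = 0 := by simp [qNat]

lemma qNat_succ (k : ℕ) : qNat q (k+1) = q * qNat q k + 1 := by
  have h : q - 1 ≠ 0 := by linarith
  unfold qNat; rw [mul_div_assoc', div_add_one h, pow_succ]; congr 1; ring

lemma qNat_nonneg (k : ℕ) : 0 ≤ qNat q k := by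
  have h1 : (0:ℝ) ≤ q ^ k - 1 := by
    have : (1:ℝ) ≤ q ^ k := one_le_pow₀ (le_of_lt hq)
    linarith
  exact div_nonneg h1 (by linarith)

lemma qNat_pos (k : ℕ) : 0 < qNat q (k+1) := by
  rw [qNat_succ hq]
  nlinarith [qNat_nonneg hq k, q_pos hq]

lemma qFactorial_pos (k : ℕ) : 0 < qFactorial q k := by
  induction k with
  | zero => norm_num [qFactorial]
  | succ n ih => exact mul_pos ih (qNat_pos hq n)

lemma qFactorial_ne (k : ℕ) : qFactorial q k ≠ 0 := ne_of_gt (qFactorial_pos hq k)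

lemma qNat_split {j m : ℕ} (h : j ≤ m) : qNat q m = q^j * qNat q (m - j) + qNat q j := by
  have h1 : q - 1 ≠ 0 := by linarith
  have h2 : q ^ j * q ^ (m - j) = q ^ m := by
    rw [← pow_add]; congr 1; omega
  unfold qNat; rw [← h2, mul_div_assoc', ← add_div]; congr 1; ring

lemma qNat_ge_nat (k : ℕ) : (k:ℝ) ≤ qNat q k := by
  induction k with
  | zero => simp [qNat]
  | succ n ih =>
    rw [qNat_succ hq]
    push_cast
    nlinarith [qNat_nonneg hq n]

end H

lemma tri_eq_sum (n : ℕ) : n*(n-1)/2 = ∑ i ∈ Finset.range n, i := by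
  have := Finset.sum_range_id_mul_two n
  omega

lemma tri_succ (n : ℕ) : (n+1)*n/2 = n*(n-1)/2 + n := by
  rw [show (n+1)*n/2 = (n+1)*((n+1)-1)/2 by norm_num, tri_eq_sum, tri_eq_sum,
    Finset.sum_range_succ]

lemma tri_add (k j : ℕ) : (k+j)*((k+j)-1)/2 = k*(k-1)/2 + k*j + j*(j-1)/2 := by
  rw [tri_eq_sum, tri_eq_sum, tri_eq_sum]
  induction j with
  | zero => simp
  | succ n ih =>
    rw [show k + (n+1) = (k+n) + 1 by omega, Finset.sum_range_succ, ih,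
      Finset.sum_range_succ, Nat.mul_succ]
    ring

section S
variable {q : ℝ} (hq : 1 < q)
include hq

lemma summable_qexp (b : ℝ) : Summable (fun k => b^k / qFactorial q k) := by
  apply summable_of_ratio_norm_eventually_le (r := 1/2) (by norm_num)
  have hev : ∀ᶠ k : ℕ in Filter.atTop, (2 * |b| ≤ (k:ℝ) + 1) := by
    filter_upwards [Filter.eventually_ge_atTop (⌈2*|b|⌉₊)] with k hk
    calc 2*|b| ≤ (⌈2*|b|⌉₊ : ℝ) := Nat.le_ceil _
    _ ≤ (k:ℝ) := by exact_mod_cast hk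
    _ ≤ (k:ℝ)+1 := by linarith
  filter_upwards [hev] with k hk
  have hfk : qFactorial q (k+1) = qFactorial q k * qNat q (k+1) := rfl
  have h1 : 0 < qNat q (k+1) := qNat_pos hq k
  have h2 : (k:ℝ)+1 ≤ qNat q (k+1) := by
    have := qNat_ge_nat hq (k+1); push_cast at this; linarith
  have h3 : |b| / qNat q (k+1) ≤ 1/2 := by
    rw [div_le_div_iff₀ h1 (by norm_num)]; linarith
  have h4 : ‖b^(k+1)/qFactorial q (k+1)‖ = (|b| / qNat q (k+1)) * ‖b^k/qFactorial q k‖ := by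
    rw [hfk]
    simp only [norm_div, norm_mul, norm_pow, Real.norm_eq_abs, pow_succ,
      abs_mul, abs_of_pos h1, abs_of_pos (qFactorial_pos hq k)]
    field_simp
  rw [h4]
  have h5 : (0:ℝ) ≤ ‖b^k/qFactorial q k‖ := norm_nonneg _
  calc (|b| / qNat q (k+1)) * ‖b^k/qFactorial q k‖ ≤ (1/2) * ‖b^k/qFactorial q k‖ :=
        mul_le_mul_of_nonneg_right h3 h5
  _ = 1/2 * ‖b^k/qFactorial q k‖ := by ring

/-- The key alternating-sum (Euler/Pascal) identity. -/
lemma pascal_alt (m : ℕ) (hm : 1 ≤ m) :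
    ∑ j ∈ Finset.range (m+1),
      ((-1:ℝ))^j * q^(j*(j-1)/2) / (qFactorial q j * qFactorial q (m-j)) = 0 := by
  obtain ⟨M, rfl⟩ : ∃ M, m = M + 1 := ⟨m - 1, by omega⟩
  set m := M + 1 with hmdef
  have hqm : qNat q m ≠ 0 := ne_of_gt (qNat_pos hq M)
  suffices h : qNat q m * (∑ j ∈ Finset.range (m+1),
      ((-1:ℝ))^j * q^(j*(j-1)/2) / (qFactorial q j * qFactorial q (m-j))) = 0 by
    rcases mul_eq_zero.mp h with h'|h'
    · exact absurd h' hqm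
    · exact h'
  rw [Finset.mul_sum]
  -- split each term
  set u : ℕ → ℝ := fun j => (-1:ℝ)^j * q^(j*(j-1)/2) * q^j * qNat q (m-j) /
      (qFactorial q j * qFactorial q (m-j)) with hu
  set v : ℕ → ℝ := fun j => (-1:ℝ)^j * q^(j*(j-1)/2) * qNat q j /
      (qFactorial q j * qFactorial q (m-j)) with hv
  set G : ℕ → ℝ := fun j => (-1:ℝ)^j * q^(j*(j-1)/2) * q^j /
      (qFactorial q j * qFactorial q (M-j)) with hG
  have hsplit : ∀ j ∈ Finset.range (m+1),
      qNat q m * ((-1:ℝ)^j * q^(j*(j-1)/2) / (qFactorial q j * qFactorial q (m-j)))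
        = u j + v j := by
    intro j hj
    rw [Finset.mem_range] at hj
    have hjm : j ≤ m := by omega
    rw [hu, hv]
    simp only
    rw [qNat_split hq hjm]
    field_simp
  rw [Finset.sum_congr rfl hsplit, Finset.sum_add_distrib]
  have huG : ∀ j ∈ Finset.range (M+1), u j = G j := by
    intro j hj
    rw [Finset.mem_range] at hj
    have h1 : m - j = (M - j) + 1 := by omega
    have hne : qNat q ((M-j)+1) ≠ 0 := ne_of_gt (qNat_pos hq (M-j))
    have hfj : qFactorial q j ≠ 0 := qFactorial_ne hq j
    have hfM : qFactorial q (M-j) ≠ 0 := qFactorial_ne hq (M-j)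
    rw [hu, hG]
    simp only [h1]
    rw [show qFactorial q ((M-j)+1) = qFactorial q (M-j) * qNat q ((M-j)+1) from rfl,
      div_eq_div_iff (mul_ne_zero hfj (mul_ne_zero hfM hne)) (mul_ne_zero hfj hfM)]
    ring
  have hum : u m = 0 := by
    simp only [hu, Nat.sub_self, qNat_zero hq, mul_zero, zero_div]
  have hsum_u : ∑ j ∈ Finset.range (m+1), u j = ∑ j ∈ Finset.range (M+1), G j := by
    rw [Finset.sum_range_succ, hum, add_zero]
    exact Finset.sum_congr rfl huG
  have hv0 : v 0 = 0 := by
    simp only [hv, qNat_zero hq, mul_zero, zero_div]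
  have hvG : ∀ j ∈ Finset.range (M+1), v (j+1) = -G j := by
    intro j hj
    rw [Finset.mem_range] at hj
    have h1 : m - (j+1) = M - j := by omega
    have h2 : (j+1)*((j+1)-1)/2 = j*(j-1)/2 + j := by
      simpa using tri_succ j
    have hne : qNat q (j+1) ≠ 0 := ne_of_gt (qNat_pos hq j)
    have hfj : qFactorial q j ≠ 0 := qFactorial_ne hq j
    have hfM : qFactorial q (M-j) ≠ 0 := qFactorial_ne hq (M-j)
    rw [hv, hG]
    simp only [h1, h2]
    rw [show qFactorial q (j+1) = qFactorial q j * qNat q (j+1) from rfl, ← neg_div,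
      div_eq_div_iff (by exact mul_ne_zero (mul_ne_zero hfj hne) hfM)
        (mul_ne_zero hfj hfM), pow_succ, pow_add]
    ring
  have hsum_v : ∑ j ∈ Finset.range (m+1), v j = -∑ j ∈ Finset.range (M+1), G j := by
    rw [Finset.sum_range_succ', hv0, add_zero, ← Finset.sum_neg_distrib]
    exact Finset.sum_congr rfl hvG
  rw [hsum_u, hsum_v]
  ring

end S



/-- The basis rewritten with a single parameter `b = [n]_q x`. -/
noncomputable def rb (q b : ℝ) (k : ℕ) : ℝ :=
  ((q:ℝ) ^ (k * (k - 1) / 2))⁻¹ * (b ^ k / qFactorial q k) *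
    qExp q (-(b * q ^ (-(k : ℤ))))

noncomputable def Fd (q b : ℝ) (p : ℕ × ℕ) : ℝ :=
  ((q:ℝ) ^ (p.1 * (p.1 - 1) / 2))⁻¹ * (b ^ p.1 / qFactorial q p.1) *
    ((-(b * q ^ (-(p.1 : ℤ)))) ^ p.2 / qFactorial q p.2)

section T
variable {q : ℝ} (hq : 1 < q)
include hq

lemma q_pow_pos (k : ℕ) : (0:ℝ) < q ^ k := pow_pos (q_pos hq) k
lemma q_pow_ne (k : ℕ) : (q:ℝ) ^ k ≠ 0 := ne_of_gt (q_pow_pos hq k)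

lemma zpow_neg_nat (k : ℕ) : (q:ℝ) ^ (-(k:ℤ)) = (q ^ k)⁻¹ := by
  rw [zpow_neg, zpow_natCast]

set_option maxHeartbeats 1000000 in
lemma summable_Fd {b : ℝ} (hb : 0 ≤ b) : Summable (Fd q b) := by
  have hg : Summable (fun p : ℕ × ℕ => (b^p.1/qFactorial q p.1) * (b^p.2/qFactorial q p.2)) :=
    Summable.mul_of_nonneg (summable_qexp hq b) (summable_qexp hq b)
      (fun k => div_nonneg (pow_nonneg hb k) (le_of_lt (qFactorial_pos hq k)))
      (fun k => div_nonneg (pow_nonneg hb k) (le_of_lt (qFactorial_pos hq k)))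
  apply Summable.of_abs
  apply Summable.of_nonneg_of_le (fun p => abs_nonneg _) _ hg
  rintro ⟨k, j⟩
  have h1 : (0:ℝ) < q ^ (k*(k-1)/2) := q_pow_pos hq _
  have h2 : (0:ℝ) ≤ b * q ^ (-(k:ℤ)) := by
    rw [zpow_neg_nat hq]
    positivity
  have h3 : b * q ^ (-(k:ℤ)) ≤ b := by
    rw [zpow_neg_nat hq]
    have : (q ^ k)⁻¹ ≤ 1 := by
      rw [inv_le_one_iff₀]; right; exact one_le_pow₀ (le_of_lt hq)
    nlinarith [h2, zpow_neg_nat hq k] 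
  simp only [Fd, abs_mul, abs_div, abs_pow, abs_neg, abs_of_nonneg h2,
    abs_of_pos (qFactorial_pos hq k), abs_of_pos (qFactorial_pos hq j),
    abs_inv, abs_of_pos h1, abs_of_nonneg hb]
  have hA : (q ^ (k*(k-1)/2) : ℝ)⁻¹ ≤ 1 := by
    rw [inv_le_one_iff₀]; right; exact one_le_pow₀ (le_of_lt hq)
  have hp : (b * q ^ (-(k:ℤ)))^j ≤ b^j := pow_le_pow_left₀ h2 h3 j
  calc (q ^ (k*(k-1)/2) : ℝ)⁻¹ * (b^k / qFactorial q k) * ((b * q ^ (-(k:ℤ)))^j / qFactorial q j)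
      ≤ 1 * (b^k / qFactorial q k) * (b^j / qFactorial q j) := by
        have e1 : (0:ℝ) < qFactorial q k := qFactorial_pos hq k
        have e2 : (0:ℝ) < qFactorial q j := qFactorial_pos hq j
        gcongr <;> positivity
    _ = (b^k / qFactorial q k) * (b^j / qFactorial q j) := by ring

lemma Fd_eq (b : ℝ) (k j : ℕ) :
    Fd q b (k, j) = (b^(k+j) * ((q:ℝ)^((k+j)*((k+j)-1)/2))⁻¹) *
      ((-1:ℝ)^j * q^(j*(j-1)/2) / (qFactorial q k * qFactorial q j)) := by
  have hqk := q_pow_ne hq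
  simp only [Fd]
  rw [zpow_neg_nat hq, neg_pow, mul_pow, inv_pow, ← pow_mul,
    tri_add k j, pow_add, pow_add]
  have hc : (q:ℝ)^(j*(j-1)/2) * q⁻¹^(j*(j-1)/2) = 1 := by
    rw [← mul_pow, mul_inv_cancel₀ (q_ne hq), one_pow]
  field_simp
  ring

lemma Fd_antidiag (b : ℝ) (m : ℕ) :
    ∑ p ∈ Finset.HasAntidiagonal.antidiagonal m, Fd q b p = if m = 0 then 1 else 0 := by
  rw [Finset.Nat.sum_antidiagonal_eq_sum_range_succ_mk]
  have hcongr : ∀ i ∈ Finset.range (m+1), Fd q b (i, m - i)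
      = (b^m * ((q:ℝ)^(m*(m-1)/2))⁻¹) *
        ((-1:ℝ)^(m-i) * q^((m-i)*((m-i)-1)/2) / (qFactorial q (m-i) * qFactorial q i)) := by
    intro i hi
    rw [Finset.mem_range] at hi
    have h1 : i + (m - i) = m := by omega
    rw [Fd_eq hq, h1, mul_comm (qFactorial q i) (qFactorial q (m-i))]
  rw [Finset.sum_congr rfl hcongr, ← Finset.mul_sum]
  have hrefl : ∑ i ∈ Finset.range (m+1),
      ((-1:ℝ)^(m-i) * q^((m-i)*((m-i)-1)/2) / (qFactorial q (m-i) * qFactorial q i))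
      = ∑ j ∈ Finset.range (m+1),
      ((-1:ℝ)^j * q^(j*(j-1)/2) / (qFactorial q j * qFactorial q (m-j))) := by
    rw [← Finset.sum_range_reflect
      (fun j => ((-1:ℝ)^j * q^(j*(j-1)/2) / (qFactorial q j * qFactorial q (m-j)))) (m+1)]
    apply Finset.sum_congr rfl
    intro i hi
    rw [Finset.mem_range] at hi
    have h2 : m + 1 - 1 - i = m - i := by omega
    have h3 : m - (m - i) = i := by omega
    rw [h2, h3]
  rw [hrefl]
  rcases Nat.eq_zero_or_pos m with hm | hm
  · subst hm
    norm_num [qFactorial]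
  · rw [pascal_alt hq m hm, if_neg (by omega), mul_zero]

/-- the master identity: the basis functions sum to 1. -/
lemma rb_hasSum {b : ℝ} (hb : 0 ≤ b) : HasSum (rb q b) 1 := by
  have hFd : Summable (Fd q b) := summable_Fd hq hb
  have hfib : ∀ k : ℕ, HasSum (fun j => Fd q b (k, j)) (rb q b k) := by
    intro k
    have hz : Summable (fun j => (-(b * q ^ (-(k:ℤ))))^j / qFactorial q j) :=
      summable_qexp hq _
    exact hz.hasSum.mul_left
      (((q:ℝ) ^ (k * (k - 1) / 2))⁻¹ * (b ^ k / qFactorial q k))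
  have hmain : HasSum (fun k => rb q b k) (∑' p, Fd q b p) :=
    hFd.hasSum.prod_fiberwise hfib
  have hval : ∑' p, Fd q b p = 1 := by
    rw [← Finset.HasAntidiagonal.sigmaAntidiagonalEquivProd.tsum_eq (Fd q b)]
    have hsig : Summable (fun σ : (Σ m : ℕ, Finset.HasAntidiagonal.antidiagonal m) =>
        Fd q b (Finset.HasAntidiagonal.sigmaAntidiagonalEquivProd σ)) :=
      Finset.HasAntidiagonal.sigmaAntidiagonalEquivProd.summable_iff.mpr hFd
    rw [Summable.tsum_sigma hsig]
    have : ∀ m : ℕ, ∑' (p : Finset.HasAntidiagonal.antidiagonal m),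
        Fd q b (Finset.HasAntidiagonal.sigmaAntidiagonalEquivProd ⟨m, p⟩) = if m = 0 then 1 else 0 := by
      intro m
      have : ∀ p : Finset.HasAntidiagonal.antidiagonal m,
          Fd q b (Finset.HasAntidiagonal.sigmaAntidiagonalEquivProd ⟨m, p⟩) = Fd q b p := fun p => rfl
      simp_rw [this]
      rw [Finset.tsum_subtype]
      exact Fd_antidiag hq b m
    simp_rw [this]
    exact tsum_eq_single 0 (fun m hm => if_neg hm) |>.trans (if_pos rfl)
  rwa [hval] at hmain

end T

section M
variable {q : ℝ} (hq : 1 < q)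
include hq

lemma rb_shift (b : ℝ) (k : ℕ) : qNat q (k+1) * rb q b (k+1) = b * rb q (b/q) k := by
  have hqne : (q:ℝ) ≠ 0 := q_ne hq
  have hargs : -(b * (q:ℝ) ^ (-((k+1:ℕ) : ℤ))) = -((b/q) * q ^ (-(k:ℤ))) := by
    rw [zpow_neg_nat hq, zpow_neg_nat hq, pow_succ]
    field_simp
  have he : (k+1)*((k+1)-1)/2 = k*(k-1)/2 + k := by simpa using tri_succ k
  simp only [rb, he]
  rw [hargs, show qFactorial q (k+1) = qFactorial q k * qNat q (k+1) from rfl,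
    pow_add, pow_succ, div_pow]
  have h1 : qNat q (k+1) ≠ 0 := ne_of_gt (qNat_pos hq k)
  have h2 : qFactorial q k ≠ 0 := qFactorial_ne hq k
  have h3 : (q:ℝ)^k ≠ 0 := q_pow_ne hq k
  have h4 : (q:ℝ)^(k*(k-1)/2) ≠ 0 := q_pow_ne hq _
  field_simp

lemma hasSum_mom1 {b : ℝ} (hb : 0 ≤ b) : HasSum (fun k => qNat q k * rb q b k) b := by
  have hb' : 0 ≤ b / q := div_nonneg hb (le_of_lt (q_pos hq))
  have h1 : HasSum (fun k => b * rb q (b/q) k) (b * 1) := (rb_hasSum hq hb').mul_left b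
  have h2 : (fun k => qNat q (k+1) * rb q b (k+1)) = (fun k => b * rb q (b/q) k) :=
    funext fun k => rb_shift hq b k
  have h3 : HasSum (fun k => qNat q (k+1) * rb q b (k+1)) (b * 1) := h2 ▸ h1
  have h4 := (hasSum_nat_add_iff (f := fun k => qNat q k * rb q b k) 1).mp h3
  simpa [qNat_zero hq] using h4

lemma hasSum_mom2 {b : ℝ} (hb : 0 ≤ b) :
    HasSum (fun k => (qNat q k)^2 * rb q b k) (b^2 + b) := by
  have hb' : 0 ≤ b / q := div_nonneg hb (le_of_lt (q_pos hq))
  have h1 : HasSum (fun k => q * (qNat q k * rb q (b/q) k) + rb q (b/q) k) (q * (b/q) + 1) :=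
    ((hasSum_mom1 hq hb').mul_left q).add (rb_hasSum hq hb')
  have h2 : HasSum (fun k => b * (q * (qNat q k * rb q (b/q) k) + rb q (b/q) k))
      (b * (q * (b/q) + 1)) := h1.mul_left b
  have h3 : (fun k => (qNat q (k+1))^2 * rb q b (k+1))
      = (fun k => b * (q * (qNat q k * rb q (b/q) k) + rb q (b/q) k)) := by
    funext k
    have : (qNat q (k+1))^2 * rb q b (k+1)
        = qNat q (k+1) * (qNat q (k+1) * rb q b (k+1)) := by ring
    rw [this, rb_shift hq b k, qNat_succ hq]
    ring
  have h4 : HasSum (fun k => (qNat q (k+1))^2 * rb q b (k+1)) (b * (q * (b/q) + 1)) :=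
    h3 ▸ h2
  have h5 := (hasSum_nat_add_iff (f := fun k => (qNat q k)^2 * rb q b k) 1).mp h4
  have hqne : (q:ℝ) ≠ 0 := q_ne hq
  have hval : b * (q * (b/q) + 1) + ∑ i ∈ Finset.range 1, (qNat q i)^2 * rb q b i
      = b^2 + b := by
    simp [qNat_zero hq]
    field_simp
  rwa [hval] at h5

end M





lemma qSzaszBasis_eq_rb {q : ℝ} (hq : 1 < q) (n k : ℕ) (x : ℝ) :
    qSzaszBasis q n k x = rb q (qNat q n * x) k := by
  simp only [qSzaszBasis, rb]
  rw [mul_pow]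
  congr 2
  ring

/-- second central moment `M_{n,q}((t-x)²;x) = x/[n]_q`. -/
theorem qSzasz_central_moment_two (q : ℝ) (hq : 1 < q) (n : ℕ) (hn : 1 ≤ n)
    (x : ℝ) (hx : 0 ≤ x) :
    qSzasz q n (fun t => (t - x) ^ 2) x = x / qNat q n := by
  set b := qNat q n * x with hbdef
  have hb : 0 ≤ b := mul_nonneg (qNat_nonneg hq n) hx
  have hnpos : 0 < qNat q n := by
    obtain ⟨m, rfl⟩ : ∃ m, n = m + 1 := ⟨n - 1, by omega⟩
    exact qNat_pos hq m
  have hnne : qNat q n ≠ 0 := ne_of_gt hnpos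
  have H2 := (hasSum_mom2 hq hb).mul_left (1 / (qNat q n)^2)
  have H1 := (hasSum_mom1 hq hb).mul_left (2 * x / qNat q n)
  have H0 := (rb_hasSum hq hb).mul_left (x^2)
  have H := (H2.sub H1).add H0
  have hfun : (fun k => 1 / (qNat q n)^2 * ((qNat q k)^2 * rb q b k)
        - 2 * x / qNat q n * (qNat q k * rb q b k) + x^2 * rb q b k)
      = (fun k => (qNat q k / qNat q n - x)^2 * rb q b k) := by
    funext k
    field_simp
    ring
  rw [hfun] at H
  have hval : 1 / (qNat q n)^2 * (b^2 + b) - 2 * x / qNat q n * b + x^2 * 1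
      = x / qNat q n := by
    rw [hbdef]
    field_simp
    ring
  rw [hval] at H
  have hsz : qSzasz q n (fun t => (t - x) ^ 2) x
      = ∑' k : ℕ, (qNat q k / qNat q n - x)^2 * rb q b k := by
    simp only [qSzasz]
    congr 1
    funext k
    rw [qSzaszBasis_eq_rb hq]
  rw [hsz, H.tsum_eq]
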